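/- Every correlation of a pair of words of length n is of the form 0^{n-j} s, where 0 ≤ j ≤ n and s is the autocorrelation of some word of length j. That is, if t = c(u,v) for some u,v ∈ Σ^n and t ≠ 0^n, and j is the largest index such that t[n-j] = 1 (i.e., j is the length of the longest border of (u,v)), then the suffix of t of length j equals the autocorrelation of the word z = u[n-j..n-1] (the longest border of (u,v)). -/
import Mathlib


/-- The correlation of `(u,v)`: bit `i` is `1` iff the suffix of `u` starting at `i`
equals the prefix of `v` of the same length. -/
def corr {α : Type*} [DecidableEq α] (u v : List α) : List Bool :=
  (List.range u.length).map fun i => decide (u.drop i = v.take (u.length - i))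

/-- Every nonzero correlation is `0^{n-j} s` where `s` is the autocorrelation of the
longest border `z = u[n-j .. n-1]`. -/
theorem stmt9 {α : Type*} [DecidableEq α] (n j : ℕ) (u v : List α)
    (hu : u.length = n) (hv : v.length = n) (hj : 0 < j) (hjn : j ≤ n)
    (hone : (corr u v)[n - j]? = some true)
    (hzero : ∀ i < n - j, (corr u v)[i]? = some false) :
    (corr u v).drop (n - j) = corr (u.drop (n - j)) (u.drop (n - j)) := by
  have hnj : n - j < n := by omega
  have hz : u.drop (n - j) = v.take j := by
    have h := hone
    simp only [corr, hu, List.getElem?_map, List.getElem?_range hnj,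
      Option.map_some] at h
    have : n - (n - j) = j := by omega
    rw [this] at h
    simpa using h
  have hzlen : (u.drop (n - j)).length = j := by
    simp [hu]; omega
  apply List.ext_getElem
  · simp [corr, hu, hzlen]; omega
  · intro k h1 h2
    have hk : k < j := by simpa [corr, hzlen] using h2
    simp only [corr, hu, hzlen, List.getElem_drop, List.getElem_map,
      List.getElem_range]
    have e3 : List.take (n - (n - j + k)) v = List.take (j - k) (List.drop (n - j) u) := by
      rw [hz, List.take_take]
      congr 1
      omega
    rw [e3]
    rw [List.drop_drop]
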